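/- M-polynomials drop below the lcm term: let R be a commutative ring, σ a finite type, and m a monomial order on σ →₀ ℕ. Let p₁, …, p_j be nonzero polynomials in MvPolynomial σ R, let t : σ →₀ ℕ satisfy m.degree p_i ≤ t pointwise for all i, and let a₁, …, a_j ∈ R satisfy Σ_i a_i · (m.leadCoeff p_i) = 0. Then the M-polynomial q = Σ_i a_i • X^(t − m.degree p_i) * p_i satisfies q = 0 or m.toSyn (m.degree q) < m.toSyn t. -/

import Mathlib

open MvPolynomial

/-- Head term of a polynomial with respect to a monomial order. -/
noncomputable def MonomialOrder.degree' {σ R : Type*} [CommSemiring R] (m : MonomialOrder σ)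
    (p : MvPolynomial σ R) : σ →₀ ℕ :=
  m.toSyn.symm (p.support.sup fun s => m.toSyn s)

/-- Head coefficient of a polynomial with respect to a monomial order. -/
noncomputable def MonomialOrder.leadCoeff' {σ R : Type*} [CommSemiring R] (m : MonomialOrder σ)
    (p : MvPolynomial σ R) : R :=
  p.coeff (m.degree' p)

lemma MonomialOrder.toSyn_degree' {σ R : Type*} [CommSemiring R] (m : MonomialOrder σ)
    (p : MvPolynomial σ R) :
    m.toSyn (m.degree' p) = p.support.sup fun s => m.toSyn s := by
  simp [MonomialOrder.degree']

lemma MonomialOrder.le_degree' {σ R : Type*} [CommSemiring R] (m : MonomialOrder σ)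
    {p : MvPolynomial σ R} {s : σ →₀ ℕ} (hs : s ∈ p.support) :
    m.toSyn s ≤ m.toSyn (m.degree' p) := by
  rw [m.toSyn_degree']
  exact Finset.le_sup (f := fun s => m.toSyn s) hs

lemma MonomialOrder.degree_mem_support' {σ R : Type*} [CommSemiring R] (m : MonomialOrder σ)
    {p : MvPolynomial σ R} (hp : p ≠ 0) :
    m.degree' p ∈ p.support := by
  have hne : p.support.Nonempty := MvPolynomial.support_nonempty.mpr hp
  obtain ⟨s, hs, hsup⟩ := Finset.exists_mem_eq_sup p.support hne fun s => m.toSyn s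
  have : m.degree' p = s := by
    simp [MonomialOrder.degree', hsup]
  rwa [this]

/-- The head term of an M-polynomial is strictly below the common multiple t of the head
terms used to form it. -/
theorem mPolynomial_degree_lt {σ R ι : Type*} [CommRing R] [Finite σ]
    (m : MonomialOrder σ) (F : Finset ι) (p : ι → MvPolynomial σ R)
    (hp : ∀ i ∈ F, p i ≠ 0) (t : σ →₀ ℕ) (ht : ∀ i ∈ F, m.degree' (p i) ≤ t)
    (a : ι → R) (ha : ∑ i ∈ F, a i * m.leadCoeff' (p i) = 0) :
    (∑ i ∈ F, a i • (monomial (t - m.degree' (p i)) 1 : MvPolynomial σ R) * p i) = 0 ∨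
      m.toSyn (m.degree'
        (∑ i ∈ F, a i • (monomial (t - m.degree' (p i)) 1 : MvPolynomial σ R) * p i)) <
        m.toSyn t := by
  set q : MvPolynomial σ R :=
    ∑ i ∈ F, a i • (monomial (t - m.degree' (p i)) 1 : MvPolynomial σ R) * p i with hq
  by_cases hq0 : q = 0
  · exact Or.inl hq0
  right
  -- key: coefficient of q at any s with toSyn t ≤ toSyn s vanishes
  have hcoeff : ∀ s : σ →₀ ℕ, m.toSyn t ≤ m.toSyn s → q.coeff s = 0 := by
    intro s hs
    rw [hq, ← hq]
    have : q.coeff s = ∑ i ∈ F, a i *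
        ((monomial (t - m.degree' (p i)) (1 : R)) * p i).coeff s := by
      rw [hq]
      rw [MvPolynomial.coeff_sum]
      refine Finset.sum_congr rfl fun i hi => ?_
      rw [smul_mul_assoc, MvPolynomial.coeff_smul, smul_eq_mul]
    rw [this]
    rcases eq_or_lt_of_le hs with heq | hlt
    · -- s "equals" t
      have hst : s = t := m.toSyn.injective heq.symm
      subst hst
      rw [← ha]
      refine Finset.sum_congr rfl fun i hi => ?_
      congr 1
      have hle := ht i hi
      rw [MvPolynomial.coeff_monomial_mul', if_pos tsub_le_self, one_mul,
        tsub_tsub_cancel_of_le hle]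
      rfl
    · -- s strictly above t : each coefficient vanishes
      refine Finset.sum_eq_zero fun i hi => ?_
      rw [MvPolynomial.coeff_monomial_mul']
      split_ifs with h
      · rw [one_mul]
        have hz : MvPolynomial.coeff (s - (t - m.degree' (p i))) (p i) = 0 := by
          by_contra hne
          have hmem : s - (t - m.degree' (p i)) ∈ (p i).support :=
            MvPolynomial.mem_support_iff.mpr hne
          have h1 : m.toSyn (s - (t - m.degree' (p i))) ≤ m.toSyn (m.degree' (p i)) :=
            m.le_degree' hmem
          have hsum : (t - m.degree' (p i)) + (s - (t - m.degree' (p i))) = s :=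
            add_tsub_cancel_of_le h
          have h2 : m.toSyn s ≤ m.toSyn t := by
            calc m.toSyn s = m.toSyn (t - m.degree' (p i)) +
                  m.toSyn (s - (t - m.degree' (p i))) := by rw [← map_add, hsum]
              _ ≤ m.toSyn (t - m.degree' (p i)) + m.toSyn (m.degree' (p i)) := by
                  exact add_le_add_right h1 _
              _ = m.toSyn ((t - m.degree' (p i)) + m.degree' (p i)) := by rw [map_add]
              _ = m.toSyn t := by rw [tsub_add_cancel_of_le (ht i hi)]
          exact absurd h2 (not_le_of_gt hlt)
        rw [hz, mul_zero]
      · rw [mul_zero]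
  -- the degree of q is in the support of q
  have hmem := m.degree_mem_support' hq0
  have hne : q.coeff (m.degree' q) ≠ 0 := MvPolynomial.mem_support_iff.mp hmem
  by_contra hcon
  exact hne (hcoeff _ (le_of_not_gt hcon))
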